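/- arXiv:1409.8168 — 2 statements merged into one kernel-verified Lean document; each statement's English description precedes it below -/
import Mathlib

section
/- Let g : ℍ → ℍ be real-(Fréchet-)differentiable at q ∈ ℍ, let f : ℍ → ℍ be real-(Fréchet-)differentiable at g(q), let ν ∈ ℍ be nonzero, and let v ∈ {1, i, j, k}. Then the directional derivative of f ∘ g at q along v satisfies D_v(f∘g)(q) = Σ_{η ∈ {1,i,j,k}} (∂f/∂p^{νη})(g(q)) · D_v(g^{νη})(q), where g^{νη} denotes the function p ↦ (νη) g(p) (νη)⁻¹, D_v denotes the real Fréchet derivative applied to the direction v, and (∂f/∂p^{νη})(g(q)) is the left GHR derivative of f at g(q) with respect to the nonzero quaternion νη. -/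
open Quaternion Filter Topology Asymptotics

noncomputable section

/-- The imaginary unit `i` of the real quaternions. -/
def qI : ℍ[ℝ] := ⟨0, 1, 0, 0⟩
/-- The imaginary unit `j` of the real quaternions. -/
def qJ : ℍ[ℝ] := ⟨0, 0, 1, 0⟩
/-- The imaginary unit `k` of the real quaternions. -/
def qK : ℍ[ℝ] := ⟨0, 0, 0, 1⟩

/-- Quaternion rotation `p ↦ μ p μ⁻¹`. -/
def qRot (μ p : ℍ[ℝ]) : ℍ[ℝ] := μ * p * μ⁻¹

/-- The left GHR derivative `∂f/∂q^μ` at `q`. -/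
def lD (f : ℍ[ℝ] → ℍ[ℝ]) (μ q : ℍ[ℝ]) : ℍ[ℝ] :=
  (4 : ℍ[ℝ])⁻¹ * (fderiv ℝ f q 1 - fderiv ℝ f q qI * qRot μ qI
    - fderiv ℝ f q qJ * qRot μ qJ - fderiv ℝ f q qK * qRot μ qK)

/-- The left conjugate GHR derivative `∂f/∂q^{μ*}` at `q`. -/
def lDc (f : ℍ[ℝ] → ℍ[ℝ]) (μ q : ℍ[ℝ]) : ℍ[ℝ] :=
  (4 : ℍ[ℝ])⁻¹ * (fderiv ℝ f q 1 + fderiv ℝ f q qI * qRot μ qI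
    + fderiv ℝ f q qJ * qRot μ qJ + fderiv ℝ f q qK * qRot μ qK)

/-- The right GHR derivative `∂ᵣf/∂q^μ` at `q`. -/
def rD (f : ℍ[ℝ] → ℍ[ℝ]) (μ q : ℍ[ℝ]) : ℍ[ℝ] :=
  (4 : ℍ[ℝ])⁻¹ * (fderiv ℝ f q 1 - qRot μ qI * fderiv ℝ f q qI
    - qRot μ qJ * fderiv ℝ f q qJ - qRot μ qK * fderiv ℝ f q qK)

/-- The right conjugate GHR derivative `∂ᵣf/∂q^{μ*}` at `q`. -/
def rDc (f : ℍ[ℝ] → ℍ[ℝ]) (μ q : ℍ[ℝ]) : ℍ[ℝ] :=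
  (4 : ℍ[ℝ])⁻¹ * (fderiv ℝ f q 1 + qRot μ qI * fderiv ℝ f q qI
    + qRot μ qJ * fderiv ℝ f q qJ + qRot μ qK * fderiv ℝ f q qK)

-- auxiliary lemmas

@[simp] lemma qI_re : qI.re = 0 := rfl
@[simp] lemma qI_imI : qI.imI = 1 := rfl
@[simp] lemma qI_imJ : qI.imJ = 0 := rfl
@[simp] lemma qI_imK : qI.imK = 0 := rfl
@[simp] lemma qJ_re : qJ.re = 0 := rfl
@[simp] lemma qJ_imI : qJ.imI = 0 := rfl
@[simp] lemma qJ_imJ : qJ.imJ = 1 := rfl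
@[simp] lemma qJ_imK : qJ.imK = 0 := rfl
@[simp] lemma qK_re : qK.re = 0 := rfl
@[simp] lemma qK_imI : qK.imI = 0 := rfl
@[simp] lemma qK_imJ : qK.imJ = 0 := rfl
@[simp] lemma qK_imK : qK.imK = 1 := rfl

lemma qI_ne : qI ≠ 0 := by simp [Quaternion.ext_iff]
lemma qJ_ne : qJ ≠ 0 := by simp [Quaternion.ext_iff]
lemma qK_ne : qK ≠ 0 := by simp [Quaternion.ext_iff]

lemma qI_inv : qI⁻¹ = -qI := by
  apply inv_eq_of_mul_eq_one_right; ext <;> simp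
lemma qJ_inv : qJ⁻¹ = -qJ := by
  apply inv_eq_of_mul_eq_one_right; ext <;> simp
lemma qK_inv : qK⁻¹ = -qK := by
  apply inv_eq_of_mul_eq_one_right; ext <;> simp

lemma tII : qI * qI * qI⁻¹ = qI := by rw [qI_inv]; ext <;> simp
lemma tIJ : qI * qJ * qI⁻¹ = -qJ := by rw [qI_inv]; ext <;> simp
lemma tIK : qI * qK * qI⁻¹ = -qK := by rw [qI_inv]; ext <;> simp
lemma tJI : qJ * qI * qJ⁻¹ = -qI := by rw [qJ_inv]; ext <;> simp
lemma tJJ : qJ * qJ * qJ⁻¹ = qJ := by rw [qJ_inv]; ext <;> simp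
lemma tJK : qJ * qK * qJ⁻¹ = -qK := by rw [qJ_inv]; ext <;> simp
lemma tKI : qK * qI * qK⁻¹ = -qI := by rw [qK_inv]; ext <;> simp
lemma tKJ : qK * qJ * qK⁻¹ = -qJ := by rw [qK_inv]; ext <;> simp
lemma tKK : qK * qK * qK⁻¹ = qK := by rw [qK_inv]; ext <;> simp

lemma rotval (ν η e r : ℍ[ℝ]) (h : η * e * η⁻¹ = r) :
    qRot (ν * η) e = ν * r * ν⁻¹ := by
  rw [qRot, mul_inv_rev, ← h]; simp [mul_assoc]

lemma rot_one (μ : ℍ[ℝ]) (hμ : μ ≠ 0) : qRot μ 1 = 1 := by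
  rw [qRot, mul_one, mul_inv_cancel₀ hμ]

lemma conjsq (ν e : ℍ[ℝ]) (hν : ν ≠ 0) (he : e * e = -1) :
    (ν * e * ν⁻¹) * (ν * e * ν⁻¹) = -1 := by
  have h1 : ν⁻¹ * ν = 1 := inv_mul_cancel₀ hν
  have h2 : ν * ν⁻¹ = 1 := mul_inv_cancel₀ hν
  calc (ν*e*ν⁻¹) * (ν*e*ν⁻¹) = ν*e*(ν⁻¹*ν)*(e*ν⁻¹) := by noncomm_ring
    _ = ν*(e*e)*ν⁻¹ := by rw [h1]; noncomm_ring
    _ = -1 := by rw [he, mul_neg_one, neg_mul, h2]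

lemma hII : qI * qI = -1 := by ext <;> simp
lemma hJJ : qJ * qJ = -1 := by ext <;> simp
lemma hKK : qK * qK = -1 := by ext <;> simp

lemma four_ne : (4 : ℍ[ℝ]) ≠ 0 := by
  have h4 : (4 : ℍ[ℝ]) = ((4:ℝ) : ℍ[ℝ]) := by norm_cast
  rw [h4]
  simp [Quaternion.coe_injective.eq_iff' Quaternion.coe_zero]

/-- The sum appearing on the RHS of the chain rule, as a function of the data. -/
def Esum (ν a b c d w : ℍ[ℝ]) : ℍ[ℝ] :=
  (4 : ℍ[ℝ])⁻¹ * (a - b * qRot (ν * 1) qI - c * qRot (ν * 1) qJ - d * qRot (ν * 1) qK)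
      * qRot (ν * 1) w
    + (4 : ℍ[ℝ])⁻¹ * (a - b * qRot (ν * qI) qI - c * qRot (ν * qI) qJ - d * qRot (ν * qI) qK)
      * qRot (ν * qI) w
    + (4 : ℍ[ℝ])⁻¹ * (a - b * qRot (ν * qJ) qI - c * qRot (ν * qJ) qJ - d * qRot (ν * qJ) qK)
      * qRot (ν * qJ) w
    + (4 : ℍ[ℝ])⁻¹ * (a - b * qRot (ν * qK) qI - c * qRot (ν * qK) qJ - d * qRot (ν * qK) qK)
      * qRot (ν * qK) w

set_option maxHeartbeats 1000000 in
lemma key (ν a b c d : ℍ[ℝ]) (hν : ν ≠ 0) (r s t u : ℝ) :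
    Esum ν a b c d (r • 1 + s • qI + t • qJ + u • qK)
      = r • a + s • b + t • c + u • d := by
  have t1I : (1:ℍ[ℝ]) * qI * 1⁻¹ = qI := by simp
  have t1J : (1:ℍ[ℝ]) * qJ * 1⁻¹ = qJ := by simp
  have t1K : (1:ℍ[ℝ]) * qK * 1⁻¹ = qK := by simp
  -- rotation values
  set X := ν * qI * ν⁻¹ with hXdef
  set Y := ν * qJ * ν⁻¹ with hYdef
  set Z := ν * qK * ν⁻¹ with hZdef
  have hX : X * X = -1 := conjsq ν qI hν hII
  have hY : Y * Y = -1 := conjsq ν qJ hν hJJ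
  have hZ : Z * Z = -1 := conjsq ν qK hν hKK
  have hn1 : ν * (1:ℍ[ℝ]) ≠ 0 := by simpa using hν
  have hnI : ν * qI ≠ 0 := mul_ne_zero hν qI_ne
  have hnJ : ν * qJ ≠ 0 := mul_ne_zero hν qJ_ne
  have hnK : ν * qK ≠ 0 := mul_ne_zero hν qK_ne
  have cancel4 : ∀ x : ℍ[ℝ], (4:ℍ[ℝ])⁻¹ * ((4:ℍ[ℝ]) * x) = x := by
    intro x; rw [← mul_assoc, inv_mul_cancel₀ four_ne, one_mul]
  -- base cases
  have E1 : Esum ν a b c d 1 = a := by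
    rw [Esum, rot_one _ hn1, rot_one _ hnI, rot_one _ hnJ, rot_one _ hnK,
      rotval ν 1 qI qI t1I, rotval ν 1 qJ qJ t1J, rotval ν 1 qK qK t1K,
      rotval ν qI qI qI tII, rotval ν qI qJ (-qJ) tIJ, rotval ν qI qK (-qK) tIK,
      rotval ν qJ qI (-qI) tJI, rotval ν qJ qJ qJ tJJ, rotval ν qJ qK (-qK) tJK,
      rotval ν qK qI (-qI) tKI, rotval ν qK qJ (-qJ) tKJ, rotval ν qK qK qK tKK]
    simp only [mul_neg, neg_mul, ← hXdef, ← hYdef, ← hZdef]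
    have expand : (4:ℍ[ℝ])⁻¹ * (a - b * X - c * Y - d * Z) * 1
        + (4:ℍ[ℝ])⁻¹ * (a - b * X - -(c * Y) - -(d * Z)) * 1
        + (4:ℍ[ℝ])⁻¹ * (a - -(b * X) - c * Y - -(d * Z)) * 1
        + (4:ℍ[ℝ])⁻¹ * (a - -(b * X) - -(c * Y) - d * Z) * 1
        = (4:ℍ[ℝ])⁻¹ * ((4:ℍ[ℝ]) * a) := by noncomm_ring
    rw [expand, cancel4]
  have EI : Esum ν a b c d qI = b := by
    rw [Esum,
      rotval ν 1 qI qI t1I, rotval ν 1 qJ qJ t1J, rotval ν 1 qK qK t1K,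
      rotval ν qI qI qI tII, rotval ν qI qJ (-qJ) tIJ, rotval ν qI qK (-qK) tIK,
      rotval ν qJ qI (-qI) tJI, rotval ν qJ qJ qJ tJJ, rotval ν qJ qK (-qK) tJK,
      rotval ν qK qI (-qI) tKI, rotval ν qK qJ (-qJ) tKJ, rotval ν qK qK qK tKK]
    simp only [mul_neg, neg_mul, ← hXdef, ← hYdef, ← hZdef]
    have expand : (4:ℍ[ℝ])⁻¹ * (a - b * X - c * Y - d * Z) * X
        + (4:ℍ[ℝ])⁻¹ * (a - b * X - -(c * Y) - -(d * Z)) * X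
        + -((4:ℍ[ℝ])⁻¹ * (a - -(b * X) - c * Y - -(d * Z)) * X)
        + -((4:ℍ[ℝ])⁻¹ * (a - -(b * X) - -(c * Y) - d * Z) * X)
        = (4:ℍ[ℝ])⁻¹ * ((4:ℍ[ℝ]) * (- (b * (X * X)))) := by noncomm_ring
    rw [expand, hX, mul_neg_one, neg_neg, cancel4]
  have EJ : Esum ν a b c d qJ = c := by
    rw [Esum,
      rotval ν 1 qI qI t1I, rotval ν 1 qJ qJ t1J, rotval ν 1 qK qK t1K,
      rotval ν qI qI qI tII, rotval ν qI qJ (-qJ) tIJ, rotval ν qI qK (-qK) tIK,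
      rotval ν qJ qI (-qI) tJI, rotval ν qJ qJ qJ tJJ, rotval ν qJ qK (-qK) tJK,
      rotval ν qK qI (-qI) tKI, rotval ν qK qJ (-qJ) tKJ, rotval ν qK qK qK tKK]
    simp only [mul_neg, neg_mul, ← hXdef, ← hYdef, ← hZdef]
    have expand : (4:ℍ[ℝ])⁻¹ * (a - b * X - c * Y - d * Z) * Y
        + -((4:ℍ[ℝ])⁻¹ * (a - b * X - -(c * Y) - -(d * Z)) * Y)
        + (4:ℍ[ℝ])⁻¹ * (a - -(b * X) - c * Y - -(d * Z)) * Y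
        + -((4:ℍ[ℝ])⁻¹ * (a - -(b * X) - -(c * Y) - d * Z) * Y)
        = (4:ℍ[ℝ])⁻¹ * ((4:ℍ[ℝ]) * (- (c * (Y * Y)))) := by noncomm_ring
    rw [expand, hY, mul_neg_one, neg_neg, cancel4]
  have EK : Esum ν a b c d qK = d := by
    rw [Esum,
      rotval ν 1 qI qI t1I, rotval ν 1 qJ qJ t1J, rotval ν 1 qK qK t1K,
      rotval ν qI qI qI tII, rotval ν qI qJ (-qJ) tIJ, rotval ν qI qK (-qK) tIK,
      rotval ν qJ qI (-qI) tJI, rotval ν qJ qJ qJ tJJ, rotval ν qJ qK (-qK) tJK,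
      rotval ν qK qI (-qI) tKI, rotval ν qK qJ (-qJ) tKJ, rotval ν qK qK qK tKK]
    simp only [mul_neg, neg_mul, ← hXdef, ← hYdef, ← hZdef]
    have expand : (4:ℍ[ℝ])⁻¹ * (a - b * X - c * Y - d * Z) * Z
        + -((4:ℍ[ℝ])⁻¹ * (a - b * X - -(c * Y) - -(d * Z)) * Z)
        + -((4:ℍ[ℝ])⁻¹ * (a - -(b * X) - c * Y - -(d * Z)) * Z)
        + (4:ℍ[ℝ])⁻¹ * (a - -(b * X) - -(c * Y) - d * Z) * Z
        = (4:ℍ[ℝ])⁻¹ * ((4:ℍ[ℝ]) * (- (d * (Z * Z)))) := by noncomm_ring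
    rw [expand, hZ, mul_neg_one, neg_neg, cancel4]
  -- linearity in w
  have lin : ∀ μ : ℍ[ℝ], qRot μ (r • 1 + s • qI + t • qJ + u • qK)
      = r • qRot μ 1 + s • qRot μ qI + t • qRot μ qJ + u • qRot μ qK := by
    intro μ
    simp [qRot, mul_add, add_mul, mul_smul_comm, smul_mul_assoc]
  have mulsmul : ∀ B x1 x2 x3 x4 : ℍ[ℝ],
      B * (r • x1 + s • x2 + t • x3 + u • x4)
        = r • (B * x1) + s • (B * x2) + t • (B * x3) + u • (B * x4) := by
    intros; simp [mul_add, mul_smul_comm]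
  have linE : Esum ν a b c d (r • 1 + s • qI + t • qJ + u • qK)
      = r • Esum ν a b c d 1 + s • Esum ν a b c d qI
        + t • Esum ν a b c d qJ + u • Esum ν a b c d qK := by
    simp only [Esum, lin, mulsmul, smul_add]
    abel
  rw [linE, E1, EI, EJ, EK]

lemma decomp (w : ℍ[ℝ]) :
    w = w.re • (1:ℍ[ℝ]) + w.imI • qI + w.imJ • qJ + w.imK • qK := by
  ext <;> simp


set_option maxHeartbeats 1000000 in
theorem left_GHR_chain_rule_directional
    (f g : ℍ[ℝ] → ℍ[ℝ]) (q ν v : ℍ[ℝ])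
    (hg : DifferentiableAt ℝ g q) (hf : DifferentiableAt ℝ f (g q))
    (hν : ν ≠ 0) (hv : v = 1 ∨ v = qI ∨ v = qJ ∨ v = qK) :
    fderiv ℝ (f ∘ g) q v
      = lD f (ν * 1) (g q) * fderiv ℝ (fun p => qRot (ν * 1) (g p)) q v
        + lD f (ν * qI) (g q) * fderiv ℝ (fun p => qRot (ν * qI) (g p)) q v
        + lD f (ν * qJ) (g q) * fderiv ℝ (fun p => qRot (ν * qJ) (g p)) q v
        + lD f (ν * qK) (g q) * fderiv ℝ (fun p => qRot (ν * qK) (g p)) q v := by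
  set F := fderiv ℝ f (g q) with hF
  set w := fderiv ℝ g q v with hw
  have hcomp : fderiv ℝ (f ∘ g) q v = F w := by
    rw [fderiv_comp q hf hg]; rfl
  have hrot : ∀ μ : ℍ[ℝ], fderiv ℝ (fun p => qRot μ (g p)) q v = qRot μ w := by
    intro μ
    have h := (((hg.hasFDerivAt.const_mul μ).mul_const' μ⁻¹)).fderiv
    have h2 : (fun p => qRot μ (g p)) = fun p => μ * g p * μ⁻¹ := rfl
    rw [h2, h]
    simp [qRot, smul_smul, hw]
  have hgoal : lD f (ν * 1) (g q) * fderiv ℝ (fun p => qRot (ν * 1) (g p)) q v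
        + lD f (ν * qI) (g q) * fderiv ℝ (fun p => qRot (ν * qI) (g p)) q v
        + lD f (ν * qJ) (g q) * fderiv ℝ (fun p => qRot (ν * qJ) (g p)) q v
        + lD f (ν * qK) (g q) * fderiv ℝ (fun p => qRot (ν * qK) (g p)) q v
      = Esum ν (F 1) (F qI) (F qJ) (F qK) w := by
    rw [hrot, hrot, hrot, hrot]
    simp only [lD, Esum, hF]
  rw [hcomp, hgoal]
  calc F w = F (w.re • 1 + w.imI • qI + w.imJ • qJ + w.imK • qK) := by rw [← decomp]
    _ = w.re • F 1 + w.imI • F qI + w.imJ • F qJ + w.imK • F qK := by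
        simp [map_add, map_smul]
    _ = Esum ν (F 1) (F qI) (F qJ) (F qK)
          (w.re • 1 + w.imI • qI + w.imJ • qJ + w.imK • qK) :=
        (key ν (F 1) (F qI) (F qJ) (F qK) hν w.re w.imI w.imJ w.imK).symm
    _ = Esum ν (F 1) (F qI) (F qJ) (F qK) w := by rw [← decomp]

end
end

section
/- Let f : ℍ → ℝ (regarded as the real-valued quaternion function q ↦ (f(q) : ℍ)) be continuously real-differentiable on an open set U ⊆ ℍ, and let q₀, q₁ ∈ U be such that the segment joining q₀ and q₁ is contained in U. Set λ := q₁ − q₀. Then f(q₁) − f(q₀) = 4 ∫₀¹ Re((∂f/∂q)(q₀ + t λ) · λ) dt = 4 ∫₀¹ Re((∂f/∂q^*)(q₀ + t λ) · λ*) dt. -/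
open Quaternion Filter Topology Asymptotics

noncomputable section

/-! ### Auxiliary definitions and lemmas -/

def reCLM : ℍ[ℝ] →L[ℝ] ℝ :=
  { toFun := QuaternionAlgebra.re
    map_add' := fun _ _ => rfl
    map_smul' := fun _ _ => rfl
    cont := Quaternion.continuous_re }

def coeCLM : ℝ →L[ℝ] ℍ[ℝ] :=
  { toFun := fun r => (r : ℍ[ℝ])
    map_add' := fun _ _ => by push_cast; ring
    map_smul' := fun _ _ => by simp [Quaternion.coe_mul_eq_smul]
    cont := Quaternion.continuous_coe }

lemma decomp_s13 (q : ℍ[ℝ]) : q = q.re • (1:ℍ[ℝ]) + q.imI • qI + q.imJ • qJ + q.imK • qK := by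
  ext <;> simp [Quaternion.re_smul] <;> simp [qI, qJ, qK]

lemma four_coe : (4 : ℍ[ℝ]) = ((4:ℝ) : ℍ[ℝ]) := by norm_cast

lemma four_inv : (4 : ℍ[ℝ])⁻¹ = (((4:ℝ)⁻¹ : ℝ) : ℍ[ℝ]) := by
  rw [four_coe, ← Quaternion.coe_inv]

lemma key_s13 (D : ℍ[ℝ] →L[ℝ] ℍ[ℝ]) (h : ∀ v, D v = ((D v).re : ℍ[ℝ])) (lam : ℍ[ℝ]) :
    ((4 : ℍ[ℝ])⁻¹ * (D 1 - D qI * qI - D qJ * qJ - D qK * qK) * lam).re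
      = 4⁻¹ * (D lam).re := by
  have hd : (D lam).re = lam.re * (D 1).re + lam.imI * (D qI).re + lam.imJ * (D qJ).re
      + lam.imK * (D qK).re := by
    conv_lhs => rw [decomp_s13 lam]
    simp [mul_comm]
  rw [hd, four_inv, Quaternion.coe_mul_eq_smul, smul_mul_assoc, Quaternion.re_smul,
    smul_eq_mul, h 1, h qI, h qJ, h qK]
  simp [Quaternion.re_mul, Quaternion.re_sub, Quaternion.imI_mul,
    Quaternion.imJ_mul, Quaternion.imK_mul, Quaternion.imI_sub, Quaternion.imJ_sub,
    Quaternion.imK_sub, Quaternion.re_coe, Quaternion.imI_coe, Quaternion.imJ_coe, Quaternion.imK_coe]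
  simp [qI, qJ, qK]
  ring

lemma keyc (D : ℍ[ℝ] →L[ℝ] ℍ[ℝ]) (h : ∀ v, D v = ((D v).re : ℍ[ℝ])) (lam : ℍ[ℝ]) :
    ((4 : ℍ[ℝ])⁻¹ * (D 1 + D qI * qI + D qJ * qJ + D qK * qK) * star lam).re
      = 4⁻¹ * (D lam).re := by
  have hd : (D lam).re = lam.re * (D 1).re + lam.imI * (D qI).re + lam.imJ * (D qJ).re
      + lam.imK * (D qK).re := by
    conv_lhs => rw [decomp_s13 lam]
    simp [mul_comm]
  rw [hd, four_inv, Quaternion.coe_mul_eq_smul, smul_mul_assoc, Quaternion.re_smul,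
    smul_eq_mul, h 1, h qI, h qJ, h qK]
  simp [Quaternion.re_mul, Quaternion.re_add, Quaternion.imI_mul,
    Quaternion.imJ_mul, Quaternion.imK_mul, Quaternion.imI_add, Quaternion.imJ_add,
    Quaternion.imK_add, Quaternion.re_star, Quaternion.imI_star, Quaternion.imJ_star,
    Quaternion.imK_star, Quaternion.re_coe, Quaternion.imI_coe, Quaternion.imJ_coe, Quaternion.imK_coe]
  simp [qI, qJ, qK]
  ring

lemma qRot_one (p : ℍ[ℝ]) : qRot 1 p = p := by simp [qRot]

theorem mean_value_theorem_real_valued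
    (f : ℍ[ℝ] → ℝ) (U : Set ℍ[ℝ]) (hU : IsOpen U)
    (hf : ContDiffOn ℝ 1 (fun p => ((f p : ℝ) : ℍ[ℝ])) U)
    (q₀ q₁ : ℍ[ℝ]) (hq₀ : q₀ ∈ U) (hq₁ : q₁ ∈ U)
    (hseg : segment ℝ q₀ q₁ ⊆ U) :
    (f q₁ - f q₀ = 4 * ∫ t in (0:ℝ)..1,
        (lD (fun p => ((f p : ℝ) : ℍ[ℝ])) 1 (q₀ + t • (q₁ - q₀)) * (q₁ - q₀)).re) ∧
    (f q₁ - f q₀ = 4 * ∫ t in (0:ℝ)..1,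
        (lDc (fun p => ((f p : ℝ) : ℍ[ℝ])) 1 (q₀ + t • (q₁ - q₀)) * star (q₁ - q₀)).re) := by
  set F : ℍ[ℝ] → ℍ[ℝ] := fun p => ((f p : ℝ) : ℍ[ℝ]) with hF
  set lam : ℍ[ℝ] := q₁ - q₀ with hlam
  have hFdiff : ∀ p ∈ U, DifferentiableAt ℝ F p := fun p hp =>
    (hf.differentiableOn one_ne_zero).differentiableAt (hU.mem_nhds hp)
  have hfd : ∀ p ∈ U, HasFDerivAt f (reCLM.comp (fderiv ℝ F p)) p := fun p hp =>
    reCLM.hasFDerivAt.comp p (hFdiff p hp).hasFDerivAt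
  have hreal : ∀ p ∈ U, ∀ v, fderiv ℝ F p v = (((fderiv ℝ F p v).re : ℝ) : ℍ[ℝ]) := by
    intro p hp
    have h1 : HasFDerivAt F (coeCLM.comp (reCLM.comp (fderiv ℝ F p))) p :=
      coeCLM.hasFDerivAt.comp p (hfd p hp)
    have hD : fderiv ℝ F p = coeCLM.comp (reCLM.comp (fderiv ℝ F p)) := h1.fderiv
    intro v
    conv_lhs => rw [hD]
    rfl
  have hmem : ∀ t ∈ Set.uIcc (0:ℝ) 1, q₀ + t • lam ∈ U := by
    intro t ht
    rw [Set.uIcc_of_le zero_le_one] at ht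
    apply hseg
    rw [segment_eq_image']
    exact ⟨t, ht, rfl⟩
  have hderiv : ∀ t ∈ Set.uIcc (0:ℝ) 1,
      HasDerivAt (fun t : ℝ => f (q₀ + t • lam)) ((fderiv ℝ F (q₀ + t • lam)) lam).re t := by
    intro t ht
    have hγd : HasDerivAt (fun t : ℝ => q₀ + t • lam) lam t := by
      simpa using ((hasDerivAt_id t).smul_const lam).const_add q₀
    exact (hfd _ (hmem t ht)).comp_hasDerivAt t hγd
  have hcont : ContinuousOn (fun t : ℝ => ((fderiv ℝ F (q₀ + t • lam)) lam).re)
      (Set.uIcc (0:ℝ) 1) := by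
    have h1 : ContinuousOn (fderiv ℝ F) U := hf.continuousOn_fderiv_of_isOpen hU le_rfl
    have h2 : ContinuousOn (fun t : ℝ => fderiv ℝ F (q₀ + t • lam)) (Set.uIcc (0:ℝ) 1) :=
      h1.comp (by fun_prop) hmem
    exact Quaternion.continuous_re.comp_continuousOn (h2.clm_apply continuousOn_const)
  have hint : IntervalIntegrable (fun t : ℝ => ((fderiv ℝ F (q₀ + t • lam)) lam).re)
      MeasureTheory.volume 0 1 := hcont.intervalIntegrable
  have FTC : ∫ t in (0:ℝ)..1, ((fderiv ℝ F (q₀ + t • lam)) lam).re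
      = f (q₀ + (1:ℝ) • lam) - f (q₀ + (0:ℝ) • lam) :=
    intervalIntegral.integral_eq_sub_of_hasDerivAt hderiv hint
  have hends : f (q₀ + (1:ℝ) • lam) - f (q₀ + (0:ℝ) • lam) = f q₁ - f q₀ := by
    rw [hlam]; norm_num
  constructor
  · have hcongr : Set.EqOn (fun t : ℝ => (lD F 1 (q₀ + t • lam) * lam).re)
        (fun t : ℝ => 4⁻¹ * ((fderiv ℝ F (q₀ + t • lam)) lam).re) (Set.uIcc (0:ℝ) 1) := by
      intro t ht
      show (lD F 1 (q₀ + t • lam) * lam).re = _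
      rw [lD, qRot_one, qRot_one, qRot_one]
      exact key_s13 _ (hreal _ (hmem t ht)) lam
    rw [intervalIntegral.integral_congr hcongr, intervalIntegral.integral_const_mul, FTC, hends]
    ring
  · have hcongr : Set.EqOn (fun t : ℝ => (lDc F 1 (q₀ + t • lam) * star lam).re)
        (fun t : ℝ => 4⁻¹ * ((fderiv ℝ F (q₀ + t • lam)) lam).re) (Set.uIcc (0:ℝ) 1) := by
      intro t ht
      show (lDc F 1 (q₀ + t • lam) * star lam).re = _
      rw [lDc, qRot_one, qRot_one, qRot_one]
      exact keyc _ (hreal _ (hmem t ht)) lam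
    rw [intervalIntegral.integral_congr hcongr, intervalIntegral.integral_const_mul, FTC, hends]
    ring


end
end
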